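/- Fix a prime p. Let V be an elementary abelian group of order p³ with basis {v₁, v₂, v₃}, and let A be the subgroup of Aut(V) generated by the automorphisms a₁, a₂ defined by v₁^{a₁} = v₁, v₂^{a₁} = v₁v₂, v₃^{a₁} = v₃ and v₁^{a₂} = v₁, v₂^{a₂} = v₂, v₃^{a₂} = v₃v₁. Then A is elementary abelian of order p², A acts faithfully on V, and every A-orbit on V has length dividing p; in particular, C_A(v) ≠ 1 for every v ∈ V, so A has no regular orbit on V even though O_p(A) is abelian. -/
import Mathlib

variable {p : ℕ}

namespace NRO

def N (i : Fin 3) : Module.End (ZMod p) (Fin 3 → ZMod p) :=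
  LinearMap.smulRight (LinearMap.proj i) (Pi.single 0 1)

def T (c d : ZMod p) : Module.End (ZMod p) (Fin 3 → ZMod p) :=
  1 + c • N 1 + d • N 2

lemma T_apply (c d : ZMod p) (v : Fin 3 → ZMod p) :
    T c d v = v + (c * v 1 + d * v 2) • (Pi.single 0 1 : Fin 3 → ZMod p) := by
  simp [T, N, add_smul, mul_smul, add_assoc]

lemma T_mul (c d c' d' : ZMod p) : T c d * T c' d' = T (c + c') (d + d') := by
  apply LinearMap.ext; intro v
  simp only [Module.End.mul_apply, T_apply]
  have h1 : (Pi.single 0 1 : Fin 3 → ZMod p) 1 = 0 := by simp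
  have h2 : (Pi.single 0 1 : Fin 3 → ZMod p) 2 = 0 := by simp
  simp [h1, h2, mul_add, add_smul]
  ring_nf
  module

lemma T_zero : T (0:ZMod p) 0 = 1 := by
  apply LinearMap.ext; intro v; simp [T_apply]

def u (c d : ZMod p) : (Module.End (ZMod p) (Fin 3 → ZMod p))ˣ :=
  ⟨T c d, T (-c) (-d), by rw [T_mul]; simp [T_zero], by rw [T_mul]; simp [T_zero]⟩

@[simp] lemma u_val (c d : ZMod p) : (u c d : Module.End (ZMod p) (Fin 3 → ZMod p)) = T c d := rfl

lemma u_mul (c d c' d' : ZMod p) : u c d * u c' d' = u (c + c') (d + d') :=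
  Units.ext (T_mul c d c' d')

lemma u_zero : u (0:ZMod p) 0 = 1 := Units.ext T_zero

lemma u_inv (c d : ZMod p) : (u c d)⁻¹ = u (-c) (-d) := by
  rw [eq_comm, eq_inv_iff_mul_eq_one, u_mul]; simp [u_zero]

lemma u_inj {c d c' d' : ZMod p} (h : u c d = u c' d') : c = c' ∧ d = d' := by
  have h' := congrArg Units.val h
  have h1 := congrArg (fun x : Module.End (ZMod p) (Fin 3 → ZMod p) => x (Pi.single 1 1) 0) h'
  have h2 := congrArg (fun x : Module.End (ZMod p) (Fin 3 → ZMod p) => x (Pi.single 2 1) 0) h'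
  simp [T_apply] at h1 h2
  exact ⟨h1, h2⟩

lemma u_pow (c d : ZMod p) (n : ℕ) : (u c d) ^ n = u ((n : ZMod p) * c) ((n : ZMod p) * d) := by
  induction n with
  | zero => simp [u_zero]
  | succ n ih => rw [pow_succ, ih, u_mul]; push_cast; ring_nf

end NRO

/-- Fix a prime `p`. Let `V = (ZMod p)³` with standard basis `v₁, v₂, v₃`
(here `vᵢ = Pi.single i 1`), and let `a₁, a₂` be the linear automorphisms of `V` determined by
`v₁ a₁ = v₁`, `v₂ a₁ = v₁ + v₂`, `v₃ a₁ = v₃` and `v₁ a₂ = v₁`, `v₂ a₂ = v₂`,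
`v₃ a₂ = v₁ + v₃`, and let `A ≤ Aut(V)` be the subgroup generated by `a₁` and `a₂`. Then `A`
is elementary abelian of order `p²`, `A` acts faithfully on `V`, and every `A`-orbit on `V`
has length dividing `p`; in particular `C_A(v) ≠ 1` for every `v ∈ V`, so `A` has no regular
orbit on `V` (even though `O_p(A)` is abelian). -/
theorem no_regular_orbit_example
    {p : ℕ} (hp : p.Prime)
    (a₁ a₂ : (Module.End (ZMod p) (Fin 3 → ZMod p))ˣ)
    (h₁₁ : (a₁ : Module.End (ZMod p) (Fin 3 → ZMod p)) (Pi.single 0 1) = Pi.single 0 1)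
    (h₁₂ : (a₁ : Module.End (ZMod p) (Fin 3 → ZMod p)) (Pi.single 1 1) =
      Pi.single 0 1 + Pi.single 1 1)
    (h₁₃ : (a₁ : Module.End (ZMod p) (Fin 3 → ZMod p)) (Pi.single 2 1) = Pi.single 2 1)
    (h₂₁ : (a₂ : Module.End (ZMod p) (Fin 3 → ZMod p)) (Pi.single 0 1) = Pi.single 0 1)
    (h₂₂ : (a₂ : Module.End (ZMod p) (Fin 3 → ZMod p)) (Pi.single 1 1) = Pi.single 1 1)
    (h₂₃ : (a₂ : Module.End (ZMod p) (Fin 3 → ZMod p)) (Pi.single 2 1) =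
      Pi.single 0 1 + Pi.single 2 1)
    (A : Subgroup (Module.End (ZMod p) (Fin 3 → ZMod p))ˣ)
    (hA : A = Subgroup.closure {a₁, a₂}) :
    Nat.card A = p ^ 2 ∧
      (∀ x ∈ A, ∀ y ∈ A, x * y = y * x) ∧
      (∀ x ∈ A, x ^ p = 1) ∧
      (∀ x ∈ A, (∀ v : Fin 3 → ZMod p,
        (x : Module.End (ZMod p) (Fin 3 → ZMod p)) v = v) → x = 1) ∧
      (∀ v : Fin 3 → ZMod p,
        Nat.card {w : Fin 3 → ZMod p |
          ∃ a ∈ A, (a : Module.End (ZMod p) (Fin 3 → ZMod p)) v = w} ∣ p) ∧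
      (∀ v : Fin 3 → ZMod p,
        ∃ a ∈ A, a ≠ 1 ∧ (a : Module.End (ZMod p) (Fin 3 → ZMod p)) v = v) := by
  haveI : Fact p.Prime := ⟨hp⟩
  -- identify a₁ and a₂
  have ha₁ : a₁ = NRO.u 1 0 := by
    apply Units.ext
    apply Module.Basis.ext (Pi.basisFun (ZMod p) (Fin 3))
    intro i
    fin_cases i <;>
      simp only [Pi.basisFun_apply, NRO.u_val] <;>
      rw [NRO.T_apply] <;> simp [h₁₁, h₁₂, h₁₃] <;> abel
  have ha₂ : a₂ = NRO.u 0 1 := by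
    apply Units.ext
    apply Module.Basis.ext (Pi.basisFun (ZMod p) (Fin 3))
    intro i
    fin_cases i <;>
      simp only [Pi.basisFun_apply, NRO.u_val] <;>
      rw [NRO.T_apply] <;> simp [h₂₁, h₂₂, h₂₃] <;> abel
  -- membership characterization
  have hmem : ∀ x, x ∈ A ↔ ∃ c d : ZMod p, x = NRO.u c d := by
    intro x
    constructor
    · intro hx
      rw [hA] at hx
      induction hx using Subgroup.closure_induction with
      | mem y hy =>
        rcases hy with hy | hy
        · exact ⟨1, 0, by rw [hy, ha₁]⟩
        · exact ⟨0, 1, by rw [hy, ha₂]⟩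
      | one => exact ⟨0, 0, (NRO.u_zero).symm⟩
      | mul y z _ _ hy hz =>
        obtain ⟨c, d, rfl⟩ := hy
        obtain ⟨c', d', rfl⟩ := hz
        exact ⟨c + c', d + d', NRO.u_mul c d c' d'⟩
      | inv y _ hy =>
        obtain ⟨c, d, rfl⟩ := hy
        exact ⟨-c, -d, NRO.u_inv c d⟩
    · rintro ⟨c, d, rfl⟩
      rw [hA]
      have h1 : a₁ ∈ Subgroup.closure ({a₁, a₂} : Set _) :=
        Subgroup.subset_closure (by simp)
      have h2 : a₂ ∈ Subgroup.closure ({a₁, a₂} : Set _) :=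
        Subgroup.subset_closure (by simp)
      have : NRO.u c d = a₁ ^ c.val * a₂ ^ d.val := by
        rw [ha₁, ha₂, NRO.u_pow, NRO.u_pow, NRO.u_mul]
        simp [ZMod.natCast_val, ZMod.cast_id]
      rw [this]
      exact mul_mem (pow_mem h1 _) (pow_mem h2 _)
  have hne : ∀ c d : ZMod p, NRO.u c d = 1 → c = 0 ∧ d = 0 := by
    intro c d h
    rw [← NRO.u_zero] at h
    exact NRO.u_inj h
  refine ⟨?_, ?_, ?_, ?_, ?_, ?_⟩
  · -- card
    have e : (ZMod p × ZMod p) ≃ A := by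
      refine Equiv.ofBijective (fun cd => ⟨NRO.u cd.1 cd.2, (hmem _).2 ⟨cd.1, cd.2, rfl⟩⟩) ⟨?_, ?_⟩
      · rintro ⟨c, d⟩ ⟨c', d'⟩ h
        have := NRO.u_inj (Subtype.ext_iff.1 h)
        exact Prod.ext this.1 this.2
      · rintro ⟨x, hx⟩
        obtain ⟨c, d, rfl⟩ := (hmem x).1 hx
        exact ⟨(c, d), rfl⟩
    rw [← Nat.card_congr e]
    simp [Nat.card_zmod, sq]
  · -- abelian
    intro x hx y hy
    obtain ⟨c, d, rfl⟩ := (hmem x).1 hx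
    obtain ⟨c', d', rfl⟩ := (hmem y).1 hy
    rw [NRO.u_mul, NRO.u_mul, add_comm c, add_comm d]
  · -- exponent p
    intro x hx
    obtain ⟨c, d, rfl⟩ := (hmem x).1 hx
    rw [NRO.u_pow]
    simp [ZMod.natCast_self, NRO.u_zero]
  · -- faithful
    intro x _ hfix
    exact Units.ext (LinearMap.ext hfix)
  · -- orbits divide p
    intro v
    by_cases h0 : v 1 = 0 ∧ v 2 = 0
    · have hS : {w : Fin 3 → ZMod p |
          ∃ a ∈ A, (a : Module.End (ZMod p) (Fin 3 → ZMod p)) v = w} = {v} := by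
        ext w
        constructor
        · rintro ⟨a, ha, rfl⟩
          obtain ⟨c, d, rfl⟩ := (hmem a).1 ha
          simp [NRO.T_apply, h0.1, h0.2]
        · rintro rfl
          exact ⟨1, A.one_mem, by simp⟩
      rw [hS]
      simp
    · have hS : {w : Fin 3 → ZMod p |
          ∃ a ∈ A, (a : Module.End (ZMod p) (Fin 3 → ZMod p)) v = w} =
          {w | ∃ s : ZMod p, w = v + s • (Pi.single 0 1 : Fin 3 → ZMod p)} := by
        ext w
        constructor
        · rintro ⟨a, ha, rfl⟩
          obtain ⟨c, d, rfl⟩ := (hmem a).1 ha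
          exact ⟨c * v 1 + d * v 2, by rw [NRO.u_val, NRO.T_apply]⟩
        · rintro ⟨s, rfl⟩
          rcases not_and_or.1 h0 with h1 | h2
          · refine ⟨NRO.u (s * (v 1)⁻¹) 0, (hmem _).2 ⟨_, _, rfl⟩, ?_⟩
            rw [NRO.u_val, NRO.T_apply]
            rw [mul_assoc, inv_mul_cancel₀ h1]
            ring_nf
          · refine ⟨NRO.u 0 (s * (v 2)⁻¹), (hmem _).2 ⟨_, _, rfl⟩, ?_⟩
            rw [NRO.u_val, NRO.T_apply]
            rw [mul_assoc, inv_mul_cancel₀ h2]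
            ring_nf
      rw [hS]
      have e : ZMod p ≃ {w : Fin 3 → ZMod p |
          ∃ s : ZMod p, w = v + s • (Pi.single 0 1 : Fin 3 → ZMod p)} := by
        refine Equiv.ofBijective (fun s : ZMod p => ⟨v + s • (Pi.single 0 1 : Fin 3 → ZMod p), s, rfl⟩) ⟨?_, ?_⟩
        · intro s s' h
          have h' := congrFun (add_left_cancel (Subtype.ext_iff.1 h)) 0
          simpa using h'
        · rintro ⟨w, s, rfl⟩
          exact ⟨s, rfl⟩
      rw [← Nat.card_congr e, Nat.card_zmod]
  · -- nontrivial stabilizers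
    intro v
    by_cases h1 : v 1 = 0
    · refine ⟨NRO.u 1 0, (hmem _).2 ⟨_, _, rfl⟩, ?_, ?_⟩
      · intro h
        exact one_ne_zero (hne _ _ h).1
      · rw [NRO.u_val, NRO.T_apply]
        simp [h1]
    · refine ⟨NRO.u (v 2) (-(v 1)), (hmem _).2 ⟨_, _, rfl⟩, ?_, ?_⟩
      · intro h
        exact h1 (neg_eq_zero.1 (hne _ _ h).2)
      · rw [NRO.u_val, NRO.T_apply]
        rw [show v 2 * v 1 + -(v 1) * v 2 = 0 by ring]
        simp
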